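/- Lemma 3.1 part 4: For every integer m ≥ 1, ‖Ψ^{(m)}(1)‖₂ ≤ 2·(2c)^{m−1}·b. -/

import Mathlib

open Matrix MeasureTheory Finset
open scoped ComplexOrder
noncomputable section

/-- The algebra `M_d(ℂ)` of `d × d` complex matrices. -/
abbrev Md (d : ℕ) := Matrix (Fin d) (Fin d) ℂ

/-- KMS inner product `⟨x,y⟩ = tr(s x* s y)` where `s = σ^{1/2}`. -/
def kmsInner {d : ℕ} (s x y : Md d) : ℂ := (s * xᴴ * s * y).trace

/-- KMS norm `‖x‖₂ = tr(s x* s x)^{1/2}` where `s = σ^{1/2}`. -/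
def kmsNorm {d : ℕ} (s x : Md d) : ℝ := Real.sqrt ((s * xᴴ * s * x).trace.re)

/-- Operator norm of a map on `M_d(ℂ)` induced by the KMS norm. -/
def kmsOpNorm {d : ℕ} (s : Md d) (η : Md d → Md d) : ℝ :=
  sInf {C : ℝ | 0 ≤ C ∧ ∀ x, kmsNorm s (η x) ≤ C * kmsNorm s x}

/-- Spectral (operator) norm of a matrix, i.e. the operator norm of the induced map
on Euclidean space. -/
def specNorm {d : ℕ} (x : Md d) : ℝ :=
  ‖(LinearMap.toContinuousLinearMap (Matrix.toEuclideanLin x))‖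

/-- The positive square root `σ^{1/2}` of a positive definite state. -/
def sqrtm {d : ℕ} (σ : Md d) (hσ : σ.PosDef) : Md d := (hσ.posSemidef.1.eigenvectorUnitary : Md d) *
    diagonal ((↑) ∘ Real.sqrt ∘ hσ.posSemidef.1.eigenvalues) *
    (star (hσ.posSemidef.1.eigenvectorUnitary : Md d))

/-- The quantum channel (Heisenberg picture) `Φ(x) = Σ_i V_i* x V_i`. -/
def channel {d : ℕ} {I : Type*} [Fintype I] (V : I → Md d) (x : Md d) : Md d :=
  ∑ i, (V i)ᴴ * x * V i

/-- The dual (Schrödinger picture) channel `Φ*(ρ) = Σ_i V_i ρ V_i*`. -/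
def channelDual {d : ℕ} {I : Type*} [Fintype I] (V : I → Md d) (ρ : Md d) : Md d :=
  ∑ i, V i * ρ * (V i)ᴴ

/-- The KMS adjoint `Φ† = Γ_σ^{-1/2} ∘ Φ* ∘ Γ_σ^{1/2}` of the channel with Kraus
operators `V`, where `s = σ^{1/2}`. -/
def channelKMSAdj {d : ℕ} {I : Type*} [Fintype I] (V : I → Md d) (s : Md d) (x : Md d) : Md d :=
  s⁻¹ * channelDual V (s * x * s) * s⁻¹

/-- Irreducibility of a completely positive map given by Kraus operators `W`:
for every nonzero `v` the span of all `W_{j_n} ⋯ W_{j_1} v` is everything. -/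
def IrredKraus {d : ℕ} {J : Type*} (W : J → Md d) : Prop :=
  ∀ v : Fin d → ℂ, v ≠ 0 →
    Submodule.span ℂ {u : Fin d → ℂ | ∃ l : List J, u = ((l.map W).prod).mulVec v} = ⊤

/-- The operator `V_{i_n} ⋯ V_{i_1}` associated with a measurement trajectory. -/
def trajOp {d : ℕ} {I : Type*} (V : I → Md d) {n : ℕ} (ω : Fin n → I) : Md d :=
  ((List.ofFn fun k => V (ω k)).reverse).prod

/-- The probability `tr(V_{i_n} ⋯ V_{i_1} ρ V_{i_1}* ⋯ V_{i_n}*)` of a trajectory. -/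
def trajProb {d : ℕ} {I : Type*} (V : I → Md d) (ρ : Md d) {n : ℕ} (ω : Fin n → I) : ℝ :=
  ((trajOp V ω) * ρ * (trajOp V ω)ᴴ).trace.re

/-- The function `h(x) = 1/(√(1+x) + x/2 + 1)` from the Bernstein bound. -/
def hfun (x : ℝ) : ℝ := (Real.sqrt (1 + x) + x / 2 + 1)⁻¹

/-- The norm `‖(Id - Φ)^{-1}|_F‖_∞` of the inverse of `Id - Φ` on
`F = {x : tr(σ x) = 0}`, with respect to the spectral norm. -/
def pseudoResNorm {d : ℕ} {I : Type*} [Fintype I] (V : I → Md d) (σ : Md d) : ℝ :=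
  sInf {C : ℝ | 0 ≤ C ∧ ∀ x : Md d, (σ * x).trace = 0 →
    specNorm x ≤ C * specNorm (x - channel V x)}

/-- The deformed map `Φ^{(k)}(x) = Σ_i f(i)^k V_i* x V_i`. -/
def phiK {d : ℕ} {I : Type*} [Fintype I] (V : I → Md d) (f : I → ℝ) (k : ℕ)
    (x : Md d) : Md d :=
  ∑ i, ((f i : ℂ) ^ k) • ((V i)ᴴ * x * V i)

/-- The KMS adjoint `Φ^{(k)†}` of `Φ^{(k)}`, where `s = σ^{1/2}`. -/
def phiKDag {d : ℕ} {I : Type*} [Fintype I] (V : I → Md d) (f : I → ℝ) (s : Md d) (k : ℕ)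
    (x : Md d) : Md d :=
  s⁻¹ * (∑ i, ((f i : ℂ) ^ k) • (V i * (s * x * s) * (V i)ᴴ)) * s⁻¹

/-- The map `Ψ^{(m)} = Σ_{l=0}^m binom(m,l) Φ^{(l)†} ∘ Φ^{(m−l)}`. -/
def psiM {d : ℕ} {I : Type*} [Fintype I] (V : I → Md d) (f : I → ℝ) (s : Md d) (m : ℕ)
    (x : Md d) : Md d :=
  ∑ l ∈ Finset.range (m + 1), (m.choose l : ℂ) • phiKDag V f s l (phiK V f (m - l) x)


/-! ### Auxiliary lemmas -/

section Aux
variable {d : ℕ} {I : Type*} [Fintype I]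

lemma psd_sqrt_aux (A : Md d) (hA : A.PosSemidef) :
    ((hA.1.eigenvectorUnitary : Md d) * diagonal (Complex.ofReal ∘ Real.sqrt ∘ hA.1.eigenvalues) *
      (star (hA.1.eigenvectorUnitary : Md d))).PosSemidef ∧
    ((hA.1.eigenvectorUnitary : Md d) * diagonal (Complex.ofReal ∘ Real.sqrt ∘ hA.1.eigenvalues) *
      (star (hA.1.eigenvectorUnitary : Md d))) *
    ((hA.1.eigenvectorUnitary : Md d) * diagonal (Complex.ofReal ∘ Real.sqrt ∘ hA.1.eigenvalues) *
      (star (hA.1.eigenvectorUnitary : Md d))) = A := by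
  have hD : (diagonal (Complex.ofReal ∘ Real.sqrt ∘ hA.1.eigenvalues) : Md d).PosSemidef :=
    posSemidef_diagonal_iff.mpr fun i => by
      simp only [Function.comp_apply]
      exact Complex.zero_le_real.mpr (Real.sqrt_nonneg _)
  refine ⟨(Unitary.isUnit_coe (U := hA.1.eigenvectorUnitary)).posSemidef_star_right_conjugate_iff.mpr hD, ?_⟩
  have hUU : star (hA.1.eigenvectorUnitary : Md d) * (hA.1.eigenvectorUnitary : Md d) = 1 :=
    Unitary.coe_star_mul_self _
  have hDD : (diagonal (Complex.ofReal ∘ Real.sqrt ∘ hA.1.eigenvalues) : Md d) *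
      diagonal (Complex.ofReal ∘ Real.sqrt ∘ hA.1.eigenvalues) = diagonal (RCLike.ofReal ∘ hA.1.eigenvalues) := by
    rw [diagonal_mul_diagonal]
    congr 1
    funext i
    simp only [Function.comp_apply]
    rw [← Complex.ofReal_mul, Real.mul_self_sqrt (hA.eigenvalues_nonneg i)]
    rfl
  conv_rhs => rw [hA.1.spectral_theorem, Unitary.conjStarAlgAut_apply]
  rw [← hDD]
  simp only [Matrix.mul_assoc]
  rw [← Matrix.mul_assoc (star _) (hA.1.eigenvectorUnitary : Md d), hUU, Matrix.one_mul]

lemma exists_sqrt_aux {A : Md d} (hA : A.PosSemidef) : ∃ C : Md d, A = Cᴴ * C := by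
  obtain ⟨h1, h2⟩ := psd_sqrt_aux A hA
  exact ⟨_, by rw [h1.isHermitian.eq, h2]⟩

lemma sqrtm_aux (σ : Md d) (hσ : σ.PosDef) :
    (sqrtm σ hσ).PosSemidef ∧ sqrtm σ hσ * sqrtm σ hσ = σ :=
  psd_sqrt_aux σ hσ.posSemidef

lemma trace_mul_conjTranspose_self_re_nonneg (E : Md d) :
    0 ≤ (E * Eᴴ).trace.re := by
  rw [Matrix.trace]
  simp only [Matrix.diag_apply, Matrix.mul_apply, Matrix.conjTranspose_apply]
  rw [Complex.re_sum]
  refine Finset.sum_nonneg fun i _ => ?_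
  rw [Complex.re_sum]
  refine Finset.sum_nonneg fun j _ => ?_
  have : E i j * star (E i j) = (Complex.normSq (E i j) : ℂ) := by
    rw [mul_comm]; exact Complex.normSq_eq_conj_mul_self.symm
  rw [this]
  simp [Complex.normSq_nonneg]

lemma trace_psd_mul_re_nonneg {A B : Md d} (hA : A.PosSemidef) (hB : B.PosSemidef) :
    0 ≤ (A * B).trace.re := by
  obtain ⟨C, hC⟩ := exists_sqrt_aux hA
  obtain ⟨D, hD⟩ := exists_sqrt_aux hB
  subst hC hD
  have h1 : Cᴴ * C * (Dᴴ * D) = Cᴴ * (C * Dᴴ * D) := by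
    simp only [Matrix.mul_assoc]
  rw [h1, Matrix.trace_mul_comm]
  have h2 : C * Dᴴ * D * Cᴴ = (C * Dᴴ) * (C * Dᴴ)ᴴ := by
    simp only [Matrix.conjTranspose_mul, Matrix.conjTranspose_conjTranspose, Matrix.mul_assoc]
  rw [h2]
  exact trace_mul_conjTranspose_self_re_nonneg _

/-- The matrix `B_{ij} = V_i s V_j^* V_j s V_i^*`. -/
def Bmat (V : I → Md d) (s : Md d) (i j : I) : Md d :=
  V i * (s * ((V j)ᴴ * V j) * s) * (V i)ᴴ

lemma psiM_one (V : I → Md d) (f : I → ℝ) (s : Md d) (m : ℕ) :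
    psiM V f s m 1 =
      ∑ i, ∑ j, ((((f i + f j) ^ m : ℝ)) : ℂ) • (s⁻¹ * Bmat V s i j * s⁻¹) := by
  simp only [psiM, phiKDag, phiK, mul_one, Bmat]
  simp only [Finset.mul_sum, Finset.sum_mul, Finset.smul_sum, Matrix.mul_smul,
    Matrix.smul_mul, smul_smul, Matrix.mul_assoc]
  rw [Finset.sum_comm]
  refine Finset.sum_congr rfl fun i _ => ?_
  rw [Finset.sum_comm]
  refine Finset.sum_congr rfl fun j _ => ?_
  rw [← Finset.sum_smul]
  congr 1
  push_cast
  rw [add_pow]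
  refine Finset.sum_congr rfl fun l hl => ?_
  ring

end Aux

section Aux2
variable {d : ℕ} {I : Type*} [Fintype I]

lemma sum4_swap {M : Type*} [AddCommMonoid M] (F : I → I → I → I → M) :
    ∑ i, ∑ j, ∑ k, ∑ l, F i j k l = ∑ k, ∑ l, ∑ i, ∑ j, F i j k l := by
  calc ∑ i, ∑ j, ∑ k, ∑ l, F i j k l
      = ∑ i, ∑ k, ∑ j, ∑ l, F i j k l :=
        Finset.sum_congr rfl fun i _ => Finset.sum_comm
    _ = ∑ k, ∑ i, ∑ j, ∑ l, F i j k l := Finset.sum_comm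
    _ = ∑ k, ∑ i, ∑ l, ∑ j, F i j k l :=
        Finset.sum_congr rfl fun k _ =>
          Finset.sum_congr rfl fun i _ => Finset.sum_comm
    _ = ∑ k, ∑ l, ∑ i, ∑ j, F i j k l :=
        Finset.sum_congr rfl fun k _ => Finset.sum_comm

lemma scalar_key {c x y : ℝ} (hc : 0 ≤ c) (hx : |x| ≤ 2 * c) (hy : |y| ≤ 2 * c)
    {m : ℕ} (hm : 1 ≤ m) :
    x ^ m * y ^ m ≤ (2 * c) ^ (m - 1) * (2 * c) ^ (m - 1) * ((x ^ 2 + y ^ 2) / 2) := by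
  have h2c : (0:ℝ) ≤ 2 * c := by linarith
  have hxm : |x| ^ m ≤ (2 * c) ^ (m - 1) * |x| := by
    conv_lhs => rw [show m = (m - 1) + 1 from (Nat.succ_pred_eq_of_pos hm).symm]
    rw [pow_succ]
    exact mul_le_mul_of_nonneg_right (pow_le_pow_left₀ (abs_nonneg _) hx _) (abs_nonneg _)
  have hym : |y| ^ m ≤ (2 * c) ^ (m - 1) * |y| := by
    conv_lhs => rw [show m = (m - 1) + 1 from (Nat.succ_pred_eq_of_pos hm).symm]
    rw [pow_succ]
    exact mul_le_mul_of_nonneg_right (pow_le_pow_left₀ (abs_nonneg _) hy _) (abs_nonneg _)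
  have h1 : x ^ m * y ^ m ≤ |x| ^ m * |y| ^ m := by
    calc x ^ m * y ^ m ≤ |x ^ m * y ^ m| := le_abs_self _
      _ = |x| ^ m * |y| ^ m := by rw [abs_mul, abs_pow, abs_pow]
  have h2 : |x| ^ m * |y| ^ m ≤ ((2 * c) ^ (m - 1) * |x|) * ((2 * c) ^ (m - 1) * |y|) :=
    mul_le_mul hxm hym (by positivity) (by positivity)
  have h3 : |x| * |y| ≤ (x ^ 2 + y ^ 2) / 2 := by
    nlinarith [sq_nonneg (|x| - |y|), sq_abs x, sq_abs y]
  calc x ^ m * y ^ m ≤ ((2 * c) ^ (m - 1) * |x|) * ((2 * c) ^ (m - 1) * |y|) :=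
        h1.trans h2
    _ = (2 * c) ^ (m - 1) * (2 * c) ^ (m - 1) * (|x| * |y|) := by ring
    _ ≤ (2 * c) ^ (m - 1) * (2 * c) ^ (m - 1) * ((x ^ 2 + y ^ 2) / 2) :=
        mul_le_mul_of_nonneg_left h3 (by positivity)

end Aux2
/-- **Lemma 3.1 part 4**: for `m ≥ 1`, `‖Ψ^{(m)}(1)‖₂ ≤ 2 (2c)^{m−1} b`. -/
theorem lemma31_part4
    {d : ℕ} (hd : 1 ≤ d) {I : Type*} [Fintype I] [Nonempty I]
    (V : I → Md d) (hV : ∑ i, (V i)ᴴ * V i = 1)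
    (σ : Md d) (hσ : σ.PosDef) (hσtr : σ.trace = 1)
    (hinv : channelDual V σ = σ)
    (f : I → ℝ) (b c : ℝ) (hb : 0 ≤ b)
    -- max_i |f(i)| = c
    (hbdd : ∀ i, |f i| ≤ c) (hatt : ∃ i, |f i| = c)
    -- π(f²) = b²
    (hvar : ∑ i, (f i) ^ 2 * ((σ * ((V i)ᴴ * V i)).trace).re = b ^ 2)
    (m : ℕ) (hm : 1 ≤ m) :
    kmsNorm (sqrtm σ hσ) (psiM V f (sqrtm σ hσ) m 1) ≤ 2 * (2 * c) ^ (m - 1) * b := by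
  classical
  set s : Md d := sqrtm σ hσ with hs_def
  have hsPSD : s.PosSemidef := (sqrtm_aux σ hσ).1
  have hsH : sᴴ = s := hsPSD.isHermitian
  have hss : s * s = σ := (sqrtm_aux σ hσ).2
  have hdet : s.det ≠ 0 := by
    intro h
    have h0 : σ.det = 0 := by rw [← hss, Matrix.det_mul, h, mul_zero]
    exact hσ.det_pos.ne' h0
  have hs1 : s * s⁻¹ = 1 := Matrix.mul_nonsing_inv _ (Ne.isUnit hdet)
  have hs2 : s⁻¹ * s = 1 := Matrix.nonsing_inv_mul _ (Ne.isUnit hdet)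
  have hsiH : (s⁻¹)ᴴ = s⁻¹ := by
    rw [Matrix.conjTranspose_nonsing_inv, hsH]
  have hc1 : ∀ X : Md d, s * (s⁻¹ * X) = X := fun X => by
    rw [← Matrix.mul_assoc, hs1, Matrix.one_mul]
  have hc2 : ∀ X : Md d, s⁻¹ * (s * X) = X := fun X => by
    rw [← Matrix.mul_assoc, hs2, Matrix.one_mul]
  -- positivity and hermiticity of the B matrices
  have hBpsd : ∀ i j, (Bmat V s i j).PosSemidef := fun i j => by
    have hA : ((V j)ᴴ * V j).PosSemidef := Matrix.posSemidef_conjTranspose_mul_self _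
    have hM : (s * ((V j)ᴴ * V j) * s).PosSemidef := by
      have := hA.mul_mul_conjTranspose_same s
      rwa [hsH] at this
    exact hM.mul_mul_conjTranspose_same (V i)
  have hBH : ∀ i j, (Bmat V s i j)ᴴ = Bmat V s i j := fun i j => (hBpsd i j).isHermitian
  -- sum of the B matrices
  have hsumB_row : ∀ i, ∑ j, Bmat V s i j = V i * σ * (V i)ᴴ := fun i => by
    simp only [Bmat]
    rw [← Finset.sum_mul, ← Finset.mul_sum, ← Finset.sum_mul, ← Finset.mul_sum, hV,
      Matrix.mul_one, hss]
  have hsumB : ∑ i, ∑ j, Bmat V s i j = σ := by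
    rw [Finset.sum_congr rfl fun i _ => hsumB_row i]
    exact hinv
  -- row/column trace sums
  have htrB1 : ∀ i, ∑ j, (Bmat V s i j).trace = (σ * ((V i)ᴴ * V i)).trace := fun i => by
    rw [← Matrix.trace_sum, hsumB_row i, Matrix.trace_mul_cycle, ← Matrix.mul_assoc,
      Matrix.trace_mul_comm, Matrix.mul_assoc]
  have htrB2 : ∀ j, ∑ i, (Bmat V s i j).trace = (σ * ((V j)ᴴ * V j)).trace := fun j => by
    simp only [Bmat]
    have h1 : ∀ i, (V i * (s * ((V j)ᴴ * V j) * s) * (V i)ᴴ).trace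
        = (((V i)ᴴ * V i) * (s * ((V j)ᴴ * V j) * s)).trace := fun i => by
      rw [Matrix.trace_mul_cycle, Matrix.mul_assoc]
    rw [Finset.sum_congr rfl fun i _ => h1 i, ← Matrix.trace_sum, ← Finset.sum_mul, hV,
      Matrix.one_mul]
    rw [Matrix.trace_mul_cycle, ← Matrix.mul_assoc, hss, Matrix.mul_assoc]
  -- the matrix T and the representation of Ψ^{(m)}(1)
  set g : I → I → ℝ := fun i j => (f i + f j) ^ m with hg_def
  set T : Md d := ∑ i, ∑ j, ((g i j : ℝ) : ℂ) • Bmat V s i j with hT_def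
  have hY : psiM V f s m 1 = s⁻¹ * T * s⁻¹ := by
    rw [psiM_one, hT_def]
    simp only [Finset.mul_sum, Finset.sum_mul, Matrix.mul_smul, Matrix.smul_mul, hg_def]
  have hTH : Tᴴ = T := by
    rw [hT_def]
    simp only [Matrix.conjTranspose_sum, Matrix.conjTranspose_smul, Complex.star_def,
      Complex.conj_ofReal]
    exact Finset.sum_congr rfl fun i _ => Finset.sum_congr rfl fun j _ => by rw [hBH]
  have hprod : s * (psiM V f s m 1)ᴴ * s * (psiM V f s m 1) = T * (s⁻¹ * (T * s⁻¹)) := by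
    rw [hY]
    simp only [Matrix.conjTranspose_mul, hsiH, hTH, Matrix.mul_assoc, hc1, hc2]
  have hsym : ∀ A B : Md d,
      (A * (s⁻¹ * (B * s⁻¹))).trace = (B * (s⁻¹ * (A * s⁻¹))).trace := fun A B => by
    have h1 : A * (s⁻¹ * (B * s⁻¹)) = (A * s⁻¹) * (B * s⁻¹) := by simp only [Matrix.mul_assoc]
    have h2 : B * (s⁻¹ * (A * s⁻¹)) = (B * s⁻¹) * (A * s⁻¹) := by simp only [Matrix.mul_assoc]
    rw [h1, h2, Matrix.trace_mul_comm]
  -- expand the trace as a quadruple sum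
  set t : I → I → I → I → ℂ :=
    fun i j k l => (Bmat V s i j * (s⁻¹ * (Bmat V s k l * s⁻¹))).trace with ht_def
  have htrace : (T * (s⁻¹ * (T * s⁻¹))).trace
      = ∑ i, ∑ j, ∑ k, ∑ l, ((g i j : ℂ) * (g k l : ℂ)) * t i j k l := by
    rw [hT_def]
    simp only [Finset.mul_sum, Finset.sum_mul, Finset.smul_sum, Matrix.mul_smul,
      Matrix.smul_mul, smul_smul, Matrix.trace_sum, Matrix.trace_smul, smul_eq_mul, ht_def]
    exact Finset.sum_congr rfl fun i _ => Finset.sum_congr rfl fun j _ =>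
      Finset.sum_congr rfl fun k _ => Finset.sum_congr rfl fun l _ => by rw [hsym]
  -- nonnegativity of the real parts
  have hqpos : ∀ i j k l, 0 ≤ (t i j k l).re := fun i j k l => by
    have h2 : (s⁻¹ * (Bmat V s k l * s⁻¹)).PosSemidef := by
      have := (hBpsd k l).mul_mul_conjTranspose_same s⁻¹
      rwa [hsiH, Matrix.mul_assoc] at this
    exact trace_psd_mul_re_nonneg (hBpsd i j) h2
  -- partial sums of t
  have hsum_t_kl : ∀ i j, ∑ k, ∑ l, t i j k l = (Bmat V s i j).trace := fun i j => by
    have h0 : (Bmat V s i j * (s⁻¹ * ((∑ k, ∑ l, Bmat V s k l) * s⁻¹))).trace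
        = ∑ k, ∑ l, t i j k l := by
      simp only [ht_def, Finset.mul_sum, Finset.sum_mul, Matrix.trace_sum]
    rw [← h0, hsumB]
    have h1 : σ * s⁻¹ = s := by rw [← hss, Matrix.mul_assoc, hs1, Matrix.mul_one]
    rw [h1, hs2, Matrix.mul_one]
  have hsum_t_ij : ∀ k l, ∑ i, ∑ j, t i j k l = (Bmat V s k l).trace := fun k l => by
    have h0 : ((∑ i, ∑ j, Bmat V s i j) * (s⁻¹ * (Bmat V s k l * s⁻¹))).trace
        = ∑ i, ∑ j, t i j k l := by
      simp only [ht_def, Finset.sum_mul, Matrix.trace_sum]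
    rw [← h0, hsumB, hsym, ← hss]
    have h1 : s * s * s⁻¹ = s := by rw [Matrix.mul_assoc, hs1, Matrix.mul_one]
    rw [h1, hs2, Matrix.mul_one]
  -- the real-part quadruple sum
  have hSre : (T * (s⁻¹ * (T * s⁻¹))).trace.re
      = ∑ i, ∑ j, ∑ k, ∑ l, g i j * g k l * (t i j k l).re := by
    rw [htrace]
    simp only [Complex.re_sum, ← Complex.ofReal_mul, Complex.re_ofReal_mul]
  -- evaluation of the weighted sums
  have hA1 : ∑ i, ∑ j, (f i) ^ 2 * (Bmat V s i j).trace.re = b ^ 2 := by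
    rw [← hvar]
    refine Finset.sum_congr rfl fun i _ => ?_
    rw [← Finset.mul_sum, ← Complex.re_sum, htrB1]
  have hA2 : ∑ i, ∑ j, (f j) ^ 2 * (Bmat V s i j).trace.re = b ^ 2 := by
    rw [Finset.sum_comm, ← hvar]
    refine Finset.sum_congr rfl fun j _ => ?_
    rw [← Finset.mul_sum, ← Complex.re_sum, htrB2]
  have hA12 : ∑ i, ∑ j, ((f i) ^ 2 + (f j) ^ 2) * (Bmat V s i j).trace.re = 2 * b ^ 2 := by
    have : ∀ i j, ((f i) ^ 2 + (f j) ^ 2) * (Bmat V s i j).trace.re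
        = (f i) ^ 2 * (Bmat V s i j).trace.re + (f j) ^ 2 * (Bmat V s i j).trace.re :=
      fun i j => by ring
    simp only [this, Finset.sum_add_distrib, hA1, hA2]
    ring
  -- pointwise scalar bound
  obtain ⟨i0, hi0⟩ := hatt
  have hc0 : 0 ≤ c := hi0 ▸ abs_nonneg _
  set K := (2 * c) ^ (m - 1) with hK_def
  have hK0 : 0 ≤ K := by positivity
  have hpt : ∀ i j k l, g i j * g k l * (t i j k l).re
      ≤ K * K * (((f i) ^ 2 + (f j) ^ 2 + ((f k) ^ 2 + (f l) ^ 2)) * (t i j k l).re) := by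
    intro i j k l
    have hx : |f i + f j| ≤ 2 * c := (abs_add_le _ _).trans (by linarith [hbdd i, hbdd j])
    have hy : |f k + f l| ≤ 2 * c := (abs_add_le _ _).trans (by linarith [hbdd k, hbdd l])
    have h1 : g i j * g k l ≤ K * K * (((f i + f j) ^ 2 + (f k + f l) ^ 2) / 2) :=
      scalar_key hc0 hx hy hm
    have h2 : ((f i + f j) ^ 2 + (f k + f l) ^ 2) / 2
        ≤ (f i) ^ 2 + (f j) ^ 2 + ((f k) ^ 2 + (f l) ^ 2) := by
      nlinarith [sq_nonneg (f i - f j), sq_nonneg (f k - f l)]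
    have h3 : g i j * g k l ≤ K * K * ((f i) ^ 2 + (f j) ^ 2 + ((f k) ^ 2 + (f l) ^ 2)) :=
      h1.trans (mul_le_mul_of_nonneg_left h2 (by positivity))
    calc g i j * g k l * (t i j k l).re
        ≤ (K * K * ((f i) ^ 2 + (f j) ^ 2 + ((f k) ^ 2 + (f l) ^ 2))) * (t i j k l).re :=
          mul_le_mul_of_nonneg_right h3 (hqpos i j k l)
      _ = K * K * (((f i) ^ 2 + (f j) ^ 2 + ((f k) ^ 2 + (f l) ^ 2)) * (t i j k l).re) := by
          ring
  -- real partial sums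
  have hq_sum_kl : ∀ i j, ∑ k, ∑ l, (t i j k l).re = (Bmat V s i j).trace.re := fun i j => by
    have : ∑ k, ∑ l, (t i j k l).re = (∑ k, ∑ l, t i j k l).re := by
      simp [Complex.re_sum]
    rw [this, hsum_t_kl]
  have hq_sum_ij : ∀ k l, ∑ i, ∑ j, (t i j k l).re = (Bmat V s k l).trace.re := fun k l => by
    have : ∑ i, ∑ j, (t i j k l).re = (∑ i, ∑ j, t i j k l).re := by
      simp [Complex.re_sum]
    rw [this, hsum_t_ij]
  -- evaluation of the dominating quadruple sum
  have hdom : ∑ i, ∑ j, ∑ k, ∑ l,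
      ((f i) ^ 2 + (f j) ^ 2 + ((f k) ^ 2 + (f l) ^ 2)) * (t i j k l).re = 4 * b ^ 2 := by
    have hsplit : ∀ i j k l : I,
        ((f i) ^ 2 + (f j) ^ 2 + ((f k) ^ 2 + (f l) ^ 2)) * (t i j k l).re
          = ((f i) ^ 2 + (f j) ^ 2) * (t i j k l).re
            + ((f k) ^ 2 + (f l) ^ 2) * (t i j k l).re := fun i j k l => by ring
    simp only [hsplit, Finset.sum_add_distrib]
    have hP1 : ∑ i, ∑ j, ∑ k, ∑ l, ((f i) ^ 2 + (f j) ^ 2) * (t i j k l).re = 2 * b ^ 2 := by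
      rw [← hA12]
      refine Finset.sum_congr rfl fun i _ => Finset.sum_congr rfl fun j _ => ?_
      rw [← hq_sum_kl i j, Finset.mul_sum]
      exact Finset.sum_congr rfl fun k _ => by rw [Finset.mul_sum]
    have hP2 : ∑ i, ∑ j, ∑ k, ∑ l, ((f k) ^ 2 + (f l) ^ 2) * (t i j k l).re = 2 * b ^ 2 := by
      rw [sum4_swap (fun i j k l => ((f k) ^ 2 + (f l) ^ 2) * (t i j k l).re), ← hA12]
      refine Finset.sum_congr rfl fun k _ => Finset.sum_congr rfl fun l _ => ?_
      rw [← hq_sum_ij k l, Finset.mul_sum]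
      exact Finset.sum_congr rfl fun i _ => by rw [Finset.mul_sum]
    rw [hP1, hP2]; ring
  -- the trace bound
  have hfinal : (T * (s⁻¹ * (T * s⁻¹))).trace.re ≤ (2 * K * b) ^ 2 := by
    rw [hSre]
    have hle : ∑ i, ∑ j, ∑ k, ∑ l, g i j * g k l * (t i j k l).re
        ≤ ∑ i, ∑ j, ∑ k, ∑ l,
            K * K * (((f i) ^ 2 + (f j) ^ 2 + ((f k) ^ 2 + (f l) ^ 2)) * (t i j k l).re) :=
      Finset.sum_le_sum fun i _ => Finset.sum_le_sum fun j _ =>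
        Finset.sum_le_sum fun k _ => Finset.sum_le_sum fun l _ => hpt i j k l
    refine hle.trans ?_
    have : ∑ i, ∑ j, ∑ k, ∑ l,
        K * K * (((f i) ^ 2 + (f j) ^ 2 + ((f k) ^ 2 + (f l) ^ 2)) * (t i j k l).re)
          = K * K * (4 * b ^ 2) := by
      simp only [← Finset.mul_sum]
      rw [hdom]
    rw [this]
    nlinarith [sq_nonneg b, sq_nonneg K]
  -- conclusion
  have hnorm : kmsNorm s (psiM V f s m 1)
      = Real.sqrt ((T * (s⁻¹ * (T * s⁻¹))).trace.re) := by
    rw [kmsNorm, hprod]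
  rw [hnorm]
  calc Real.sqrt ((T * (s⁻¹ * (T * s⁻¹))).trace.re)
      ≤ Real.sqrt ((2 * K * b) ^ 2) := Real.sqrt_le_sqrt hfinal
    _ = 2 * K * b := Real.sqrt_sq (by positivity)
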